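/- Let η, C > 0 and let F : {1,...,M} → R satisfy Σ_{x=1}^{M-k} |F(x+k) − F(x)| ≤ C for all integers k with 1 ≤ k ≤ ηM. Then Σ_{x=1}^M |F(x) − A| = O_η(C), where A is the mean of F over {1,...,M}; that is, there is a constant c depending only on η (not on M, F, or C) with Σ_x |F(x) − A| ≤ cC. -/

import Mathlib

open Finset

private lemma tele_abs (F : ℕ → ℝ) (a d K : ℕ) :
    |F (a + d) - F a| ≤
      (∑ j ∈ range (d / K), |F (a + (j+1)*K) - F (a + j*K)|) +
        |F (a + d) - F (a + (d / K)*K)| := by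
  have h1 : F (a + (d/K)*K) - F a = ∑ j ∈ range (d / K), (F (a + (j+1)*K) - F (a + j*K)) := by
    rw [Finset.sum_range_sub (fun j => F (a + j*K))]
    simp
  have h2 : F (a + d) - F a = (∑ j ∈ range (d / K), (F (a + (j+1)*K) - F (a + j*K)))
      + (F (a + d) - F (a + (d/K)*K)) := by rw [← h1]; ring
  rw [h2]
  refine (abs_add_le _ _).trans ?_
  gcongr
  exact Finset.abs_sum_le_sum_abs _ _

private lemma shift_le (g : ℕ → ℝ) (hg : ∀ x, 0 ≤ g x) (n s m : ℕ) (h : n + s ≤ m) :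
    ∑ x ∈ Icc 1 n, g (x + s) ≤ ∑ x ∈ Icc 1 m, g x := by
  have e : ∑ x ∈ Icc 1 n, g (x + s) = ∑ x ∈ Icc (1+s) (n+s), g x := by
    rw [← Finset.map_add_right_Icc, Finset.sum_map]
    rfl
  rw [e]
  apply Finset.sum_le_sum_of_subset_of_nonneg
  · apply Finset.Icc_subset_Icc <;> omega
  · intros; exact hg _

private lemma Sd_bound (F : ℕ → ℝ) (C : ℝ) (M K d : ℕ) (hK : 1 ≤ K) (hd1 : 1 ≤ d)
    (hdM : d + 1 ≤ M) (hC : 0 ≤ C)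
    (hk : ∀ k : ℕ, 1 ≤ k → k ≤ K → ∑ x ∈ Icc 1 (M - k), |F (x + k) - F x| ≤ C) :
    ∑ x ∈ Icc 1 (M - d), |F (x + d) - F x| ≤ ((d / K : ℕ) + 1 : ℝ) * C := by
  set m := d / K with hm
  have hmK : m * K ≤ d := Nat.div_mul_le_self d K
  have hr : d % K < K := Nat.mod_lt _ (by omega)
  have hrd : m * K + d % K = d := by rw [mul_comm]; exact Nat.div_add_mod d K
  calc ∑ x ∈ Icc 1 (M - d), |F (x + d) - F x|
      ≤ ∑ x ∈ Icc 1 (M - d), ((∑ j ∈ range m, |F (x + (j+1)*K) - F (x + j*K)|)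
          + |F (x + d) - F (x + m*K)|) := by
        apply Finset.sum_le_sum
        intro x _
        exact tele_abs F x d K
    _ = (∑ j ∈ range m, ∑ x ∈ Icc 1 (M - d), |F (x + (j+1)*K) - F (x + j*K)|)
          + ∑ x ∈ Icc 1 (M - d), |F (x + d) - F (x + m*K)| := by
        rw [Finset.sum_add_distrib, Finset.sum_comm]
    _ ≤ (∑ _j ∈ range m, C) + C := by
        gcongr with j hj
        · -- main jumps
          simp only [Finset.mem_range] at hj
          have key : ∑ x ∈ Icc 1 (M - d), |F (x + (j+1)*K) - F (x + j*K)| ≤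
              ∑ x ∈ Icc 1 (M - K), |F (x + K) - F x| := by
            have := shift_le (fun y => |F (y + K) - F y|) (fun y => abs_nonneg _)
              (M - d) (j * K) (M - K) (by
                have h1 : (j+1) * K ≤ m * K := Nat.mul_le_mul_right _ (by omega)
                have h2 : j*K + K ≤ d := by
                  calc j*K + K = (j+1)*K := by ring
                    _ ≤ m*K := h1
                    _ ≤ d := hmK
                omega)
            convert this using 2 with x
            congr 1
            ring_nf
          exact key.trans (hk K hK le_rfl)
        · -- remainder
          rcases Nat.eq_zero_or_pos (d % K) with h0 | hpos
          · have hdm : d = m * K := by omega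
            calc ∑ x ∈ Icc 1 (M - d), |F (x + d) - F (x + m*K)| = 0 := by
                  apply Finset.sum_eq_zero
                  intro x _
                  rw [← hdm]; simp
              _ ≤ C := hC
          · set r := d % K with hrdef
            have key : ∑ x ∈ Icc 1 (M - d), |F (x + d) - F (x + m*K)| ≤
                ∑ x ∈ Icc 1 (M - r), |F (x + r) - F x| := by
              have h2 := shift_le (fun y => |F (y + r) - F y|) (fun y => abs_nonneg _)
                (M - d) (m * K) (M - r) (by omega)
              refine le_trans (le_of_eq ?_) h2
              apply Finset.sum_congr rfl
              intro x _
              have hx : x + d = x + m * K + r := by omega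
              rw [hx]
            exact key.trans (hk r hpos (le_of_lt hr))
    _ = ((m : ℝ) + 1) * C := by
        rw [Finset.sum_const, Finset.card_range]
        push_cast
        ring
    _ = ((d / K : ℕ) + 1 : ℝ) * C := by rw [hm]

private lemma pair_reindex (M : ℕ) (f : ℕ → ℕ → ℝ) :
    ∑ p ∈ (Icc 1 M ×ˢ Icc 1 M).filter (fun p => p.1 < p.2), f p.1 p.2
      = ∑ d ∈ Icc 1 (M-1), ∑ x ∈ Icc 1 (M - d), f x (x + d) := by
  rw [Finset.sum_sigma' (Icc 1 (M-1)) (fun d => Icc 1 (M - d)) (fun d x => f x (x + d))]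
  apply Finset.sum_nbij' (i := fun p => (⟨p.2 - p.1, p.1⟩ : Σ _ : ℕ, ℕ))
    (j := fun s => (s.2, s.2 + s.1))
  · intro p hp
    simp only [Finset.mem_filter, Finset.mem_product, Finset.mem_Icc, Finset.mem_sigma] at *
    omega
  · intro s hs
    simp only [Finset.mem_filter, Finset.mem_product, Finset.mem_Icc, Finset.mem_sigma] at *
    omega
  · intro p hp
    simp only [Finset.mem_filter, Finset.mem_product, Finset.mem_Icc] at hp
    ext <;> simp <;> omega
  · intro s hs
    simp only [Finset.mem_sigma, Finset.mem_Icc] at hs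
    simp
  · intro p hp
    simp only [Finset.mem_filter, Finset.mem_product, Finset.mem_Icc] at hp
    simp only []
    congr 1
    omega

theorem stmt_10 (η : ℝ) (hη : 0 < η) :
    ∃ c : ℝ, ∀ (M : ℕ) (F : ℕ → ℝ) (C : ℝ), 0 < C → 1 ≤ η * M →
      (∀ k : ℕ, 1 ≤ k → (k : ℝ) ≤ η * M →
        ∑ x ∈ Finset.Icc 1 (M - k), |F (x + k) - F x| ≤ C) →
      ∑ x ∈ Finset.Icc 1 M, |F x - (∑ y ∈ Finset.Icc 1 M, F y) / M| ≤ c * C := by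
  refine ⟨4 / η + 2, ?_⟩
  intro M F C hC hηM h
  have hM : 1 ≤ M := by
    by_contra hc
    push_neg at hc
    interval_cases M
    simp at hηM
    linarith
  have hMR : (0:ℝ) < M := by exact_mod_cast hM
  set K := ⌊η * M⌋₊ with hKdef
  have hK1 : 1 ≤ K := Nat.le_floor (by exact_mod_cast hηM)
  have hKle : (K:ℝ) ≤ η * M := Nat.floor_le (by positivity)
  have hKR : (0:ℝ) < K := by exact_mod_cast hK1
  clear_value K
  have hk' : ∀ k : ℕ, 1 ≤ k → k ≤ K →
      ∑ x ∈ Icc 1 (M - k), |F (x + k) - F x| ≤ C := by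
    intro k h1 h2
    exact h k h1 (le_trans (by exact_mod_cast h2) hKle)
  have cardM : (Icc 1 M).card = M := by rw [Nat.card_Icc]; omega
  -- Step A
  have stepA : ∑ x ∈ Icc 1 M, |F x - (∑ y ∈ Icc 1 M, F y) / M| ≤
      (∑ x ∈ Icc 1 M, ∑ y ∈ Icc 1 M, |F x - F y|) / M := by
    conv_rhs => rw [Finset.sum_div]
    apply Finset.sum_le_sum
    intro x _
    have e : F x - (∑ y ∈ Icc 1 M, F y) / M = (∑ y ∈ Icc 1 M, (F x - F y)) / M := by
      rw [Finset.sum_sub_distrib, Finset.sum_const, cardM, nsmul_eq_mul]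
      field_simp
    rw [e, abs_div, abs_of_pos hMR]
    gcongr
    exact Finset.abs_sum_le_sum_abs _ _
  -- Step B : double sum = 2 * chained sum
  set P := (Icc 1 M ×ˢ Icc 1 M) with hP
  have hsplit : ∑ x ∈ Icc 1 M, ∑ y ∈ Icc 1 M, |F x - F y| =
      ∑ p ∈ P.filter (fun p => p.1 < p.2), |F p.1 - F p.2| +
      ∑ p ∈ P.filter (fun p => ¬ p.1 < p.2), |F p.1 - F p.2| := by
    rw [Finset.sum_filter_add_sum_filter_not, hP, Finset.sum_product]
  have e1 : ∑ p ∈ P.filter (fun p => ¬ p.1 < p.2), |F p.1 - F p.2| =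
      ∑ p ∈ P.filter (fun p => p.2 < p.1), |F p.1 - F p.2| := by
    symm
    apply Finset.sum_subset
    · intro p hp
      simp only [Finset.mem_filter] at *
      exact ⟨hp.1, by omega⟩
    · intro p hp hnp
      simp only [Finset.mem_filter] at hp hnp
      have : p.1 = p.2 := by
        by_contra hne
        exact hnp ⟨hp.1, by omega⟩
      rw [this]
      simp
  have e2 : ∑ p ∈ P.filter (fun p => p.2 < p.1), |F p.1 - F p.2| =
      ∑ p ∈ P.filter (fun p => p.1 < p.2), |F p.1 - F p.2| := by
    apply Finset.sum_nbij' (i := Prod.swap) (j := Prod.swap)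
    · intro p hp
      simp only [Finset.mem_filter, Finset.mem_product, hP] at *
      exact ⟨⟨hp.1.2, hp.1.1⟩, hp.2⟩
    · intro p hp
      simp only [Finset.mem_filter, Finset.mem_product, hP] at *
      exact ⟨⟨hp.1.2, hp.1.1⟩, hp.2⟩
    · intro p _; simp
    · intro p _; simp
    · intro p _
      simp only [Prod.fst_swap, Prod.snd_swap]
      exact abs_sub_comm _ _
  have hpr := pair_reindex M (fun x y => |F x - F y|)
  have hdouble : ∑ x ∈ Icc 1 M, ∑ y ∈ Icc 1 M, |F x - F y| =
      2 * ∑ d ∈ Icc 1 (M-1), ∑ x ∈ Icc 1 (M - d), |F (x + d) - F x| := by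
    rw [hsplit, e1, e2, hpr]
    rw [two_mul]
    congr 1 <;> · apply Finset.sum_congr rfl; intro d _; apply Finset.sum_congr rfl
                  intro x _; exact abs_sub_comm _ _
  -- Step C : bound the chained sum
  have hT : ∑ d ∈ Icc 1 (M-1), ∑ x ∈ Icc 1 (M - d), |F (x + d) - F x| ≤
      (M : ℝ) * (((M:ℝ) / K + 1) * C) := by
    calc ∑ d ∈ Icc 1 (M-1), ∑ x ∈ Icc 1 (M - d), |F (x + d) - F x|
        ≤ ∑ _d ∈ Icc 1 (M-1), (((M:ℝ) / K + 1) * C) := by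
          apply Finset.sum_le_sum
          intro d hd
          simp only [Finset.mem_Icc] at hd
          refine (Sd_bound F C M K d hK1 hd.1 (by omega) hC.le hk').trans ?_
          have h1 : ((d / K : ℕ) : ℝ) + 1 ≤ (M:ℝ) / K + 1 := by
            have : ((d / K : ℕ) : ℝ) ≤ (d : ℝ) / K := Nat.cast_div_le
            have hdM : (d : ℝ) ≤ (M : ℝ) := by exact_mod_cast Nat.le_of_lt_succ (by omega)
            have : (d : ℝ) / K ≤ (M : ℝ) / K := by gcongr
            linarith [Nat.cast_div_le (α := ℝ) (m := d) (n := K)]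
          calc (((d / K : ℕ) : ℝ) + 1) * C ≤ ((M:ℝ) / K + 1) * C := by gcongr
            _ = _ := rfl
      _ = ((M - 1 : ℕ) : ℝ) * (((M:ℝ) / K + 1) * C) := by
          rw [Finset.sum_const, Nat.card_Icc, nsmul_eq_mul]
          norm_num
      _ ≤ (M : ℝ) * (((M:ℝ) / K + 1) * C) := by
          have hpos : 0 ≤ ((M:ℝ) / K + 1) * C := by positivity
          have : ((M - 1 : ℕ) : ℝ) ≤ (M : ℝ) := by exact_mod_cast Nat.sub_le M 1
          nlinarith
  -- Step D : K is at least η M / 2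
  have h2K : η * M ≤ 2 * K := by
    rcases le_or_gt (η * M) 2 with hc | hc
    · have : (1:ℝ) ≤ K := by exact_mod_cast hK1
      linarith
    · have := Nat.sub_one_lt_floor (η * M)
      rw [← hKdef] at this
      linarith
  have hMK : (M : ℝ) / K ≤ 2 / η := by
    rw [div_le_div_iff₀ hKR hη]
    nlinarith
  -- Assemble
  calc ∑ x ∈ Icc 1 M, |F x - (∑ y ∈ Icc 1 M, F y) / M|
      ≤ (∑ x ∈ Icc 1 M, ∑ y ∈ Icc 1 M, |F x - F y|) / M := stepA
    _ = 2 * (∑ d ∈ Icc 1 (M-1), ∑ x ∈ Icc 1 (M - d), |F (x + d) - F x|) / M := by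
        rw [hdouble]
    _ ≤ 2 * ((M : ℝ) * (((M:ℝ) / K + 1) * C)) / M := by gcongr
    _ = 2 * (((M:ℝ) / K + 1) * C) := by field_simp
    _ = (2 * ((M:ℝ) / K) + 2) * C := by ring
    _ ≤ (4 / η + 2) * C := by
        have e4 : 4 / η = 2 * (2 / η) := by ring
        have h4 : 2 * ((M:ℝ) / K) + 2 ≤ 4 / η + 2 := by linarith
        exact mul_le_mul_of_nonneg_right h4 hC.le
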